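/- Rainwater–Simons theorem for almost convergence: let B be an (I)-generating subset of B_{X*}, (x_n) a bounded sequence in a real Banach space X, and x ∈ X such that for every x* ∈ B the sequence (x*(x_n)) is almost convergent to x*(x) (i.e., (1/n)∑_{k=1}^n x*(x_{k+l}) → x*(x) uniformly in l). Then (x*(x_n)) is almost convergent to x*(x) for every x* ∈ X*. -/

import Mathlib

open Filter NormedSpace

/-- The weak*-closed convex hull of a set of functionals. -/
noncomputable def wstarClConvHull {X : Type*} [NormedAddCommGroup X] [NormedSpace ℝ X]
    (S : Set (StrongDual ℝ X)) : Set (StrongDual ℝ X) :=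
  ⇑StrongDual.toWeakDual ⁻¹' closure (convexHull ℝ (⇑StrongDual.toWeakDual '' S))

/-- `B` (I)-generates `K` if, whenever `B` is written as a countable union
`B = ⋃ₙ Bₙ`, `K` is the norm-closed convex hull of the union of the
weak*-closed convex hulls of the `Bₙ`. -/
def IGenerates {X : Type*} [NormedAddCommGroup X] [NormedSpace ℝ X]
    (B K : Set (StrongDual ℝ X)) : Prop :=
  ∀ Bn : ℕ → Set (StrongDual ℝ X), B = ⋃ n, Bn n →
    K = closure (convexHull ℝ (⋃ n, wstarClConvHull (Bn n)))

/-- A real sequence is almost convergent to `t` if its shifted Cesàro means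
converge to `t` uniformly in the shift (Lorentz's characterization). -/
def AlmostConvergentTo (s : ℕ → ℝ) (t : ℝ) : Prop :=
  TendstoUniformly
    (fun (n : ℕ) (l : ℕ) => (1 / (n : ℝ)) * ∑ k ∈ Finset.Icc 1 n, s (k + l))
    (fun _ => t) atTop

namespace RSAux

variable {X : Type*} [NormedAddCommGroup X] [NormedSpace ℝ X]

/-- The defect of the `l`-shifted Cesàro mean of length `n`. -/
noncomputable def ces (x : ℕ → X) (z : X) (f : StrongDual ℝ X) (n l : ℕ) : ℝ :=
  f z - (1 / (n : ℝ)) * ∑ k ∈ Finset.Icc 1 n, f (x (k + l))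

lemma ces_smul (x : ℕ → X) (z : X) (c : ℝ) (f : StrongDual ℝ X) (n l : ℕ) :
    ces x z (c • f) n l = c * ces x z f n l := by
  simp only [ces, ContinuousLinearMap.coe_smul', Pi.smul_apply, smul_eq_mul, ← Finset.mul_sum]
  ring

lemma ces_add (x : ℕ → X) (z : X) (f g : StrongDual ℝ X) (n l : ℕ) :
    ces x z (f + g) n l = ces x z f n l + ces x z g n l := by
  simp only [ces, ContinuousLinearMap.add_apply, Finset.sum_add_distrib]
  ring

lemma ces_eq (x : ℕ → X) (z : X) (f f' : StrongDual ℝ X) (n l : ℕ) :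
    ces x z f n l = ces x z f' n l + ces x z (f - f') n l := by
  have := ces_add x z f' (f - f') n l
  rw [add_sub_cancel] at this
  exact this

lemma abs_ces_sub_le (x : ℕ → X) (z : X) {R : ℝ} (hR : ∀ n, ‖x n‖ ≤ R) (f : StrongDual ℝ X)
    {n : ℕ} (hn : 1 ≤ n) (l : ℕ) :
    |ces x z f n l| ≤ ‖f‖ * (‖z‖ + R) := by
  have hfz : |f z| ≤ ‖f‖ * ‖z‖ := by
    simpa [Real.norm_eq_abs] using f.le_opNorm z
  have hb : ∀ k, |f (x k)| ≤ ‖f‖ * R := by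
    intro k
    calc |f (x k)| ≤ ‖f‖ * ‖x k‖ := by simpa [Real.norm_eq_abs] using f.le_opNorm (x k)
      _ ≤ ‖f‖ * R := mul_le_mul_of_nonneg_left (hR k) (norm_nonneg f)
  have hn0 : (0:ℝ) < (n:ℝ) := by exact_mod_cast hn
  have hsum : |∑ k ∈ Finset.Icc 1 n, f (x (k + l))| ≤ (n : ℝ) * (‖f‖ * R) := by
    calc |∑ k ∈ Finset.Icc 1 n, f (x (k + l))|
        ≤ ∑ k ∈ Finset.Icc 1 n, |f (x (k + l))| := Finset.abs_sum_le_sum_abs _ _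
      _ ≤ ∑ _k ∈ Finset.Icc 1 n, (‖f‖ * R) := Finset.sum_le_sum fun k _ => hb _
      _ = (n : ℝ) * (‖f‖ * R) := by
          rw [Finset.sum_const, Nat.card_Icc]
          simp [nsmul_eq_mul]
  have hmean : |(1 / (n : ℝ)) * ∑ k ∈ Finset.Icc 1 n, f (x (k + l))| ≤ ‖f‖ * R := by
    rw [abs_mul, abs_of_nonneg (by positivity : (0:ℝ) ≤ 1 / (n:ℝ))]
    calc (1 / (n : ℝ)) * |∑ k ∈ Finset.Icc 1 n, f (x (k + l))|
        ≤ (1 / (n : ℝ)) * ((n : ℝ) * (‖f‖ * R)) :=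
          mul_le_mul_of_nonneg_left hsum (by positivity)
      _ = ‖f‖ * R := by field_simp
  calc |ces x z f n l| ≤ |f z| + |(1 / (n : ℝ)) * ∑ k ∈ Finset.Icc 1 n, f (x (k + l))| := by
        rw [ces, sub_eq_add_neg]
        exact (abs_add_le _ _).trans (by rw [abs_neg])
    _ ≤ ‖f‖ * ‖z‖ + ‖f‖ * R := add_le_add hfz hmean
    _ = ‖f‖ * (‖z‖ + R) := by ring

/-- The weak*-closed convex hull of a set on which the Cesàro defects are
uniformly small (for `n ≥ N`) has the same property. -/
lemma wstar_subset (x : ℕ → X) (z : X) (ε : ℝ) (N : ℕ) (S : Set (StrongDual ℝ X))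
    (hS : ∀ f ∈ S, ∀ n, N ≤ n → ∀ l, |ces x z f n l| ≤ ε) :
    ∀ f ∈ wstarClConvHull S, ∀ n, N ≤ n → ∀ l, |ces x z f n l| ≤ ε := by
  set D' : Set (WeakDual ℝ X) :=
    {g | ∀ n, N ≤ n → ∀ l,
      |g z - (1 / (n : ℝ)) * ∑ k ∈ Finset.Icc 1 n, g (x (k + l))| ≤ ε} with hD'
  have hclosed : IsClosed D' := by
    have : D' = ⋂ (n : ℕ) (_ : N ≤ n) (l : ℕ),
        {g : WeakDual ℝ X |
          |g z - (1 / (n : ℝ)) * ∑ k ∈ Finset.Icc 1 n, g (x (k + l))| ≤ ε} := by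
      ext g
      simp only [hD', Set.mem_setOf_eq, Set.mem_iInter]
    rw [this]
    refine isClosed_iInter fun n => isClosed_iInter fun _ => isClosed_iInter fun l => ?_
    have hc : Continuous fun g : WeakDual ℝ X =>
        |g z - (1 / (n : ℝ)) * ∑ k ∈ Finset.Icc 1 n, g (x (k + l))| :=
      ((WeakDual.eval_continuous z).sub
        (continuous_const.mul
          (continuous_finset_sum _ fun k _ => WeakDual.eval_continuous _))).abs
    exact isClosed_le hc continuous_const
  have hconv : Convex ℝ D' := by
    intro g hg g' hg' a b ha hb hab
    intro n hn l
    have happ : ∀ y : X, (a • g + b • g') y = a * g y + b * g' y := fun y => rfl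
    have hkey : (a • g + b • g') z
        - (1 / (n : ℝ)) * ∑ k ∈ Finset.Icc 1 n, (a • g + b • g') (x (k + l))
        = a * (g z - (1 / (n : ℝ)) * ∑ k ∈ Finset.Icc 1 n, g (x (k + l)))
        + b * (g' z - (1 / (n : ℝ)) * ∑ k ∈ Finset.Icc 1 n, g' (x (k + l))) := by
      simp only [happ, Finset.sum_add_distrib, ← Finset.mul_sum]
      ring
    rw [hkey]
    calc |a * _ + b * _| ≤ |a * _| + |b * _| := abs_add_le _ _
      _ ≤ a * ε + b * ε := by
          rw [abs_mul, abs_mul, abs_of_nonneg ha, abs_of_nonneg hb]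
          exact add_le_add (mul_le_mul_of_nonneg_left (hg n hn l) ha)
            (mul_le_mul_of_nonneg_left (hg' n hn l) hb)
      _ = ε := by rw [← add_mul, hab, one_mul]
  have himg : ⇑StrongDual.toWeakDual '' S ⊆ D' := by
    rintro _ ⟨f, hf, rfl⟩
    intro n hn l
    exact hS f hf n hn l
  intro f hf n hn l
  have : StrongDual.toWeakDual f ∈ D' :=
    closure_minimal (convexHull_min himg hconv) hclosed hf
  exact this n hn l

end RSAux

/-- Rainwater–Simons theorem for almost convergence: if `B` (I)-generates the
dual unit ball and `(f(x_n))ₙ` is almost convergent to `f(z)` for every `f ∈ B`,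
then the same holds for every `f ∈ X*`. -/
theorem rainwater_simons_almost_convergence {X : Type*} [NormedAddCommGroup X]
    [NormedSpace ℝ X] [CompleteSpace X]
    (B : Set (StrongDual ℝ X)) (hB1 : B ⊆ Metric.closedBall (0 : StrongDual ℝ X) 1)
    (hI : IGenerates B (Metric.closedBall (0 : StrongDual ℝ X) 1))
    (x : ℕ → X) (R : ℝ) (hR : ∀ n, ‖x n‖ ≤ R) (z : X)
    (h : ∀ f ∈ B, AlmostConvergentTo (fun n => f (x n)) (f z)) :
    ∀ f : StrongDual ℝ X, AlmostConvergentTo (fun n => f (x n)) (f z) := by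
  classical
  -- reformulate almost convergence via the Cesàro defect `ces`
  have hAC : ∀ f : StrongDual ℝ X, AlmostConvergentTo (fun n => f (x n)) (f z) ↔
      ∀ ε > 0, ∃ N : ℕ, ∀ n, N ≤ n → ∀ l, |RSAux.ces x z f n l| < ε := by
    intro f
    rw [AlmostConvergentTo, Metric.tendstoUniformly_iff]
    constructor
    · intro hf ε hε
      rcases (eventually_atTop).1 (hf ε hε) with ⟨N, hN⟩
      exact ⟨N, fun n hn l => by simpa [RSAux.ces, Real.dist_eq] using hN n hn l⟩
    · intro hf ε hε
      rcases hf ε hε with ⟨N, hN⟩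
      exact eventually_atTop.2 ⟨N, fun n hn l => by
        simpa [RSAux.ces, Real.dist_eq] using hN n hn l⟩
  have hR0 : 0 ≤ R := le_trans (norm_nonneg (x 0)) (hR 0)
  set M : ℝ := ‖z‖ + R with hM
  have hM0 : 0 ≤ M := by positivity
  -- main step : the conclusion for functionals in the unit ball
  have main : ∀ f ∈ Metric.closedBall (0 : StrongDual ℝ X) 1,
      ∀ ε > 0, ∃ N : ℕ, ∀ n, N ≤ n → ∀ l, |RSAux.ces x z f n l| < ε := by
    intro f hf ε hε
    set ε3 : ℝ := ε / 4 with hε3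
    have hε3pos : 0 < ε3 := by positivity
    -- the decomposition of B
    set Bn : ℕ → Set (StrongDual ℝ X) := fun N =>
      {g ∈ B | ∀ n, N ≤ n → ∀ l, |RSAux.ces x z g n l| ≤ ε3} with hBn
    have hBun : B = ⋃ N, Bn N := by
      apply Set.Subset.antisymm
      · intro g hg
        rcases (hAC g).1 (h g hg) ε3 hε3pos with ⟨N, hN⟩
        exact Set.mem_iUnion.2 ⟨N, hg, fun n hn l => (hN n hn l).le⟩
      · exact Set.iUnion_subset fun N => fun g hg => hg.1
    have hball := hI Bn hBun
    -- the sets D N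
    set D : ℕ → Set (StrongDual ℝ X) := fun N =>
      {g | ∀ n, N ≤ n → ∀ l, |RSAux.ces x z g n l| ≤ ε3} with hD
    have hDmono : ∀ N N', N ≤ N' → D N ⊆ D N' := by
      intro N N' hNN' g hg n hn l
      exact hg n (le_trans hNN' hn) l
    have hwD : ∀ N, wstarClConvHull (Bn N) ⊆ D N := by
      intro N g hg
      exact RSAux.wstar_subset x z ε3 N (Bn N) (fun g' hg' => hg'.2) g hg
    have hDconv : Convex ℝ (⋃ N, D N) := by
      intro g hg g' hg' a b ha hb hab
      rcases Set.mem_iUnion.1 hg with ⟨N1, hN1⟩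
      rcases Set.mem_iUnion.1 hg' with ⟨N2, hN2⟩
      refine Set.mem_iUnion.2 ⟨max N1 N2, fun n hn l => ?_⟩
      have h1 := hDmono N1 (max N1 N2) (le_max_left _ _) hN1 n hn l
      have h2 := hDmono N2 (max N1 N2) (le_max_right _ _) hN2 n hn l
      have : RSAux.ces x z (a • g + b • g') n l
          = a * RSAux.ces x z g n l + b * RSAux.ces x z g' n l := by
        rw [RSAux.ces_add, RSAux.ces_smul, RSAux.ces_smul]
      rw [this]
      calc |a * _ + b * _| ≤ |a * _| + |b * _| := abs_add_le _ _
        _ ≤ a * ε3 + b * ε3 := by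
            rw [abs_mul, abs_mul, abs_of_nonneg ha, abs_of_nonneg hb]
            exact add_le_add (mul_le_mul_of_nonneg_left h1 ha)
              (mul_le_mul_of_nonneg_left h2 hb)
        _ = ε3 := by rw [← add_mul, hab, one_mul]
    -- f lies in the closure of the convex hull; approximate it
    have hfcl : f ∈ closure (convexHull ℝ (⋃ N, wstarClConvHull (Bn N))) := by
      rw [← hball]; exact hf
    set δ : ℝ := ε3 / (M + 1) with hδ
    have hδpos : 0 < δ := by positivity
    rcases Metric.mem_closure_iff.1 hfcl δ hδpos with ⟨f', hf', hdist⟩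
    have hf'D : f' ∈ ⋃ N, D N := by
      have hsub : convexHull ℝ (⋃ N, wstarClConvHull (Bn N)) ⊆ ⋃ N, D N := by
        apply convexHull_min _ hDconv
        exact Set.iUnion_subset fun N =>
          (hwD N).trans (Set.subset_iUnion (fun N => D N) N)
      exact hsub hf'
    rcases Set.mem_iUnion.1 hf'D with ⟨N0, hN0⟩
    refine ⟨max N0 1, fun n hn l => ?_⟩
    have hnN0 : N0 ≤ n := le_trans (le_max_left _ _) hn
    have hn1 : 1 ≤ n := le_trans (le_max_right _ _) hn
    have hdiff : |RSAux.ces x z (f - f') n l| ≤ ‖f - f'‖ * M :=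
      RSAux.abs_ces_sub_le x z hR (f - f') hn1 l
    have hnormlt : ‖f - f'‖ * M < ε3 := by
      have h1 : ‖f - f'‖ < δ := by rwa [dist_eq_norm] at hdist
      calc ‖f - f'‖ * M ≤ ‖f - f'‖ * (M + 1) :=
            mul_le_mul_of_nonneg_left (by linarith) (norm_nonneg _)
        _ < δ * (M + 1) := by
            have hM1 : (0:ℝ) < M + 1 := by positivity
            exact mul_lt_mul_of_pos_right h1 hM1
        _ = ε3 := by rw [hδ, div_mul_cancel₀ _ (by positivity)]
    have : RSAux.ces x z f n l
        = RSAux.ces x z f' n l + RSAux.ces x z (f - f') n l :=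
      RSAux.ces_eq x z f f' n l
    rw [this]
    calc |RSAux.ces x z f' n l + RSAux.ces x z (f - f') n l|
        ≤ |RSAux.ces x z f' n l| + |RSAux.ces x z (f - f') n l| := abs_add_le _ _
      _ < ε3 + ε3 := by
          have := hN0 n hnN0 l
          have h2 := hdiff.trans_lt hnormlt
          linarith
      _ < ε := by rw [hε3]; linarith
  -- from the unit ball to all functionals, by scaling
  intro f
  rw [hAC f]
  by_cases hf0 : f = 0
  · intro ε hε
    refine ⟨1, fun n hn l => ?_⟩
    simp [RSAux.ces, hf0, hε]
  · have hfn : 0 < ‖f‖ := norm_pos_iff.2 hf0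
    set g : StrongDual ℝ X := ‖f‖⁻¹ • f with hg
    have hgball : g ∈ Metric.closedBall (0 : StrongDual ℝ X) 1 := by
      rw [Metric.mem_closedBall, dist_zero_right, hg, norm_smul, norm_inv, norm_norm]
      rw [inv_mul_cancel₀ (ne_of_gt hfn)]
    intro ε hε
    have hεf : 0 < ε / ‖f‖ := by positivity
    rcases main g hgball (ε / ‖f‖) hεf with ⟨N, hN⟩
    refine ⟨N, fun n hn l => ?_⟩
    have hfg : f = ‖f‖ • g := by
      rw [hg, smul_smul, mul_inv_cancel₀ (ne_of_gt hfn), one_smul]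
    calc |RSAux.ces x z f n l| = |RSAux.ces x z (‖f‖ • g) n l| := by rw [← hfg]
      _ = ‖f‖ * |RSAux.ces x z g n l| := by
          rw [RSAux.ces_smul, abs_mul, abs_of_nonneg (norm_nonneg f)]
      _ < ‖f‖ * (ε / ‖f‖) := mul_lt_mul_of_pos_left (hN n hn l) hfn
      _ = ε := by field_simp
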